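/- Let 0 < λ < 1 and let f(x) = λ·x·(1 − x). There exists a function h : ℝ → ℝ that is continuous and strictly increasing on the interval (0, 1/2], maps (0, 1/2] into (0, 1/2], and satisfies h(h(x)) = f(x) and f(x) < h(x) < x for every x ∈ (0, 1/2]. In particular f(1/2) = λ/4 < h(1/2) < 1/2. -/

import Mathlib

open Set Filter Topology Function

namespace LogisticHalfAux


noncomputable def F (lam : ℝ) : ℝ → ℝ := fun x => lam * x * (1 - x)

lemma F_cont (lam : ℝ) : Continuous (F lam) := by
  unfold F; continuity

lemma F_mem {lam : ℝ} (h0 : 0 < lam) (h1 : lam < 1) {x : ℝ} (hx : x ∈ Icc (0:ℝ) (1/2)) :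
    F lam x ∈ Icc (0:ℝ) (1/2) := by
  obtain ⟨hx0, hx2⟩ := hx
  have hp : 0 ≤ x * (1 - x) := mul_nonneg hx0 (by linarith)
  have hq : x * (1 - x) ≤ 1/4 := by nlinarith [sq_nonneg (1/2 - x)]
  constructor
  · unfold F; nlinarith
  · unfold F; nlinarith [mul_nonneg (sub_nonneg.2 h1.le) hp]

lemma F_le {lam : ℝ} (h0 : 0 < lam) {x : ℝ} (hx : 0 ≤ x) : F lam x ≤ lam * x := by
  unfold F; nlinarith [mul_nonneg (mul_nonneg h0.le hx) hx]

lemma iter_mem {lam : ℝ} (h0 : 0 < lam) (h1 : lam < 1) {x : ℝ} (hx : x ∈ Icc (0:ℝ) (1/2)) :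
    ∀ n, (F lam)^[n] x ∈ Icc (0:ℝ) (1/2) := by
  intro n; induction n with
  | zero => simpa using hx
  | succ n ih => rw [Function.iterate_succ_apply']; exact F_mem h0 h1 ih

lemma iter_le {lam : ℝ} (h0 : 0 < lam) (h1 : lam < 1) {x : ℝ} (hx : x ∈ Icc (0:ℝ) (1/2)) :
    ∀ n, (F lam)^[n] x ≤ lam ^ n * x := by
  intro n; induction n with
  | zero => simp
  | succ n ih =>
    rw [Function.iterate_succ_apply']
    calc F lam ((F lam)^[n] x) ≤ lam * (F lam)^[n] x :=
          F_le h0 (iter_mem h0 h1 hx n).1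
      _ ≤ lam * (lam ^ n * x) := by nlinarith
      _ = lam ^ (n+1) * x := by ring

lemma iter_zero (lam : ℝ) : ∀ n, (F lam)^[n] (0:ℝ) = 0 := by
  intro n; induction n with
  | zero => simp
  | succ n ih => rw [Function.iterate_succ_apply', ih]; unfold F; ring

lemma one_sub_ge_exp {a s : ℝ} (ha : 0 ≤ a) (has : a ≤ s) (hs : s < 1) :
    Real.exp (-(a/(1-s))) ≤ 1 - a := by
  have h1s : 0 < 1 - s := by linarith
  have hpos : 0 < 1 + a/(1-s) := by positivity
  have h2 : 1 + a/(1-s) ≤ Real.exp (a/(1-s)) := by linarith [Real.add_one_le_exp (a/(1-s))]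
  rw [Real.exp_neg]
  have h4 : (Real.exp (a/(1-s)))⁻¹ ≤ (1 + a/(1-s))⁻¹ := inv_anti₀ hpos h2
  refine h4.trans ?_
  rw [← one_div, div_le_iff₀ hpos]
  have key : (1-a) * (1 + a/(1-s)) = 1 + a*(s-a)/(1-s) := by
    field_simp; ring
  have : 0 ≤ a*(s-a)/(1-s) := by
    apply div_nonneg (mul_nonneg ha (by linarith)) h1s.le
  linarith [key]

lemma iter_sub_ge {lam : ℝ} (h0 : 0 < lam) (h1 : lam < 1) {x y : ℝ}
    (hx : 0 ≤ x) (hxy : x ≤ y) (hy : y ≤ 1/2) (hs : x + y < 1) :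
    ∀ n, lam ^ n * (y - x) *
        Real.exp (-((x+y)/(1-(x+y)) * ∑ k ∈ Finset.range n, lam ^ k))
      ≤ (F lam)^[n] y - (F lam)^[n] x := by
  have hxmem : x ∈ Icc (0:ℝ) (1/2) := ⟨hx, by linarith⟩
  have hymem : y ∈ Icc (0:ℝ) (1/2) := ⟨by linarith, hy⟩
  have hs0 : 0 ≤ x + y := by linarith
  intro n; induction n with
  | zero => simp
  | succ n ih =>
    set X := (F lam)^[n] x with hXdef
    set Y := (F lam)^[n] y with hYdef
    have hX := iter_mem h0 h1 hxmem n
    have hY := iter_mem h0 h1 hymem n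
    have hlhs_nonneg : 0 ≤ lam ^ n * (y - x) *
        Real.exp (-((x+y)/(1-(x+y)) * ∑ k ∈ Finset.range n, lam ^ k)) := by
      have : 0 ≤ y - x := by linarith
      positivity
    have hXY : X ≤ Y := by linarith
    have hid : (F lam)^[n+1] y - (F lam)^[n+1] x = lam * ((Y - X) * (1 - (X + Y))) := by
      rw [Function.iterate_succ_apply', Function.iterate_succ_apply']
      show F lam Y - F lam X = _
      unfold F; ring
    have hpowle : lam ^ n ≤ 1 := pow_le_one₀ h0.le h1.le
    have hbound1 : X + Y ≤ (x+y) * lam ^ n := by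
      have h5 := iter_le h0 h1 hxmem n
      have h6 := iter_le h0 h1 hymem n
      rw [← hXdef] at h5; rw [← hYdef] at h6
      nlinarith
    have hXYs : X + Y ≤ x + y := by nlinarith
    have hbound2 : Real.exp (-((x+y)/(1-(x+y)) * lam ^ n)) ≤ 1 - (X + Y) := by
      have e1 : Real.exp (-((x+y)/(1-(x+y)) * lam ^ n))
          ≤ Real.exp (-((X+Y)/(1-(x+y)))) := by
        apply Real.exp_le_exp.2
        rw [neg_le_neg_iff]
        rw [div_le_iff₀ (by linarith : (0:ℝ) < 1 - (x+y))]
        have heq : (x+y)/(1-(x+y)) * lam ^ n * (1 - (x+y)) = (x+y) * lam ^ n := by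
          have hne : (1:ℝ) - (x+y) ≠ 0 := by linarith
          field_simp
        rw [heq]; exact hbound1
      refine e1.trans (one_sub_ge_exp (by linarith [hX.1, hY.1]) hXYs hs)
    have hmul : (lam ^ n * (y - x) *
          Real.exp (-((x+y)/(1-(x+y)) * ∑ k ∈ Finset.range n, lam ^ k))) *
          Real.exp (-((x+y)/(1-(x+y)) * lam ^ n))
        ≤ (Y - X) * (1 - (X + Y)) :=
      mul_le_mul ih hbound2 (Real.exp_nonneg _) (by linarith)
    calc lam ^ (n+1) * (y - x) *
          Real.exp (-((x+y)/(1-(x+y)) * ∑ k ∈ Finset.range (n+1), lam ^ k))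
        = lam * ((lam ^ n * (y - x) *
            Real.exp (-((x+y)/(1-(x+y)) * ∑ k ∈ Finset.range n, lam ^ k))) *
            Real.exp (-((x+y)/(1-(x+y)) * lam ^ n))) := by
          rw [Finset.sum_range_succ,
            show -((x+y)/(1-(x+y)) * (∑ k ∈ Finset.range n, lam ^ k + lam ^ n))
              = -((x+y)/(1-(x+y)) * ∑ k ∈ Finset.range n, lam ^ k)
                + -((x+y)/(1-(x+y)) * lam ^ n) from by ring,
            Real.exp_add]
          ring
      _ ≤ lam * ((Y - X) * (1 - (X + Y))) := by
          exact mul_le_mul_of_nonneg_left hmul h0.le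
      _ = (F lam)^[n+1] y - (F lam)^[n+1] x := hid.symm

noncomputable def Gseq (lam : ℝ) (n : ℕ) (x : ℝ) : ℝ := (F lam)^[n] x / lam ^ n

noncomputable def G (lam : ℝ) (x : ℝ) : ℝ := ⨅ n, Gseq lam n x

variable {lam : ℝ}

lemma Gseq_nonneg (h0 : 0 < lam) (h1 : lam < 1) {x : ℝ} (hx : x ∈ Icc (0:ℝ) (1/2)) (n : ℕ) :
    0 ≤ Gseq lam n x :=
  div_nonneg (iter_mem h0 h1 hx n).1 (pow_nonneg h0.le n)

lemma Gseq_le (h0 : 0 < lam) (h1 : lam < 1) {x : ℝ} (hx : x ∈ Icc (0:ℝ) (1/2)) (n : ℕ) :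
    Gseq lam n x ≤ x := by
  rw [Gseq, div_le_iff₀ (pow_pos h0 n)]
  calc (F lam)^[n] x ≤ lam ^ n * x := iter_le h0 h1 hx n
    _ = x * lam ^ n := by ring

lemma Gseq_succ (h0 : 0 < lam) (n : ℕ) (x : ℝ) :
    Gseq lam (n+1) x = Gseq lam n x * (1 - (F lam)^[n] x) := by
  unfold Gseq
  rw [Function.iterate_succ_apply', pow_succ]
  show F lam ((F lam)^[n] x) / _ = _
  unfold F
  field_simp

lemma Gseq_antitone (h0 : 0 < lam) (h1 : lam < 1) {x : ℝ} (hx : x ∈ Icc (0:ℝ) (1/2)) :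
    Antitone (fun n => Gseq lam n x) := by
  apply antitone_nat_of_succ_le
  intro n
  rw [Gseq_succ h0]
  have h2 := (iter_mem h0 h1 hx n).1
  have h3 := Gseq_nonneg h0 h1 hx n
  nlinarith

lemma Gseq_bddBelow (h0 : 0 < lam) (h1 : lam < 1) {x : ℝ} (hx : x ∈ Icc (0:ℝ) (1/2)) :
    BddBelow (range fun n => Gseq lam n x) := by
  refine ⟨0, ?_⟩; rintro y ⟨n, rfl⟩; exact Gseq_nonneg h0 h1 hx n

lemma Gseq_tendsto (h0 : 0 < lam) (h1 : lam < 1) {x : ℝ} (hx : x ∈ Icc (0:ℝ) (1/2)) :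
    Tendsto (fun n => Gseq lam n x) atTop (𝓝 (G lam x)) :=
  tendsto_atTop_ciInf (Gseq_antitone h0 h1 hx) (Gseq_bddBelow h0 h1 hx)

lemma G_le_Gseq (h0 : 0 < lam) (h1 : lam < 1) {x : ℝ} (hx : x ∈ Icc (0:ℝ) (1/2)) (n : ℕ) :
    G lam x ≤ Gseq lam n x :=
  ciInf_le (Gseq_bddBelow h0 h1 hx) n

lemma Gseq_sub_le (h0 : 0 < lam) (h1 : lam < 1) {x : ℝ} (hx : x ∈ Icc (0:ℝ) (1/2)) (n : ℕ) :
    ∀ m, n ≤ m → Gseq lam n x - Gseq lam m x ≤ (lam^n - lam^m)/(4*(1-lam)) := by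
  intro m hnm
  induction m, hnm using Nat.le_induction with
  | base => simp
  | succ m hm ih =>
    have hstep : Gseq lam m x - Gseq lam (m+1) x ≤ lam^m/4 := by
      rw [Gseq_succ h0]
      have h2 := iter_mem h0 h1 hx m
      have h3 := Gseq_nonneg h0 h1 hx m
      have h4 := Gseq_le h0 h1 hx m
      have h5 := iter_le h0 h1 hx m
      have h6 : (F lam)^[m] x ≤ lam^m / 2 := by
        calc (F lam)^[m] x ≤ lam^m * x := h5
          _ ≤ lam^m / 2 := by nlinarith [pow_nonneg h0.le m, hx.2]
      have h7 : Gseq lam m x ≤ 1/2 := le_trans h4 hx.2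
      nlinarith [h2.1]
    have heq : (lam^n - lam^m)/(4*(1-lam)) + lam^m/4 = (lam^n - lam^(m+1))/(4*(1-lam)) := by
      have hne : (1:ℝ) - lam ≠ 0 := by linarith
      field_simp
      ring
    linarith

lemma G_bounds (h0 : 0 < lam) (h1 : lam < 1) {x : ℝ} (hx : x ∈ Icc (0:ℝ) (1/2)) (n : ℕ) :
    Gseq lam n x - lam^n/(4*(1-lam)) ≤ G lam x := by
  apply ge_of_tendsto (Gseq_tendsto h0 h1 hx)
  filter_upwards [eventually_ge_atTop n] with m hm
  have h2 := Gseq_sub_le h0 h1 hx n m hm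
  have h3 : (lam^n - lam^m)/(4*(1-lam)) ≤ lam^n/(4*(1-lam)) := by
    gcongr
    · linarith [pow_nonneg h0.le m]
  linarith


lemma G_continuousOn (h0 : 0 < lam) (h1 : lam < 1) :
    ContinuousOn (G lam) (Icc (0:ℝ) (1/2)) := by
  have huc : TendstoUniformlyOn (fun n x => Gseq lam n x) (G lam) atTop (Icc (0:ℝ) (1/2)) := by
    rw [Metric.tendstoUniformlyOn_iff]
    intro ε hε
    have htd : Tendsto (fun n : ℕ => lam^n/(4*(1-lam))) atTop (𝓝 0) := by
      have := tendsto_pow_atTop_nhds_zero_of_lt_one h0.le h1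
      simpa using this.div_const (4*(1-lam))
    filter_upwards [htd.eventually (gt_mem_nhds hε)] with n hn x hx
    have hb1 := G_bounds h0 h1 hx n
    have hb2 := G_le_Gseq h0 h1 hx n
    rw [Real.dist_eq, abs_of_nonpos (by linarith)]
    linarith
  apply huc.continuousOn
  refine Filter.Eventually.frequently ?_
  filter_upwards with n
  exact (((F_cont lam).iterate n).div_const _).continuousOn

lemma G_zero (lam : ℝ) : G lam 0 = 0 := by
  have h : ∀ n, Gseq lam n (0:ℝ) = 0 := by
    intro n; simp [Gseq, iter_zero lam n]
  rw [G]
  simp only [h]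
  exact ciInf_const

lemma G_le_id (h0 : 0 < lam) (h1 : lam < 1) {x : ℝ} (hx : x ∈ Icc (0:ℝ) (1/2)) :
    G lam x ≤ x := by
  have := G_le_Gseq h0 h1 hx 0
  simpa [Gseq] using this

lemma geom_sum_le_inv (h0 : 0 < lam) (h1 : lam < 1) (n : ℕ) :
    ∑ k ∈ Finset.range n, lam ^ k ≤ (1-lam)⁻¹ := by
  rw [geom_sum_eq h1.ne n]
  rw [div_le_iff_of_neg (by linarith : lam - 1 < 0)]
  have hinv : (1-lam)⁻¹ * (lam-1) = -1 := by
    have hne : (1:ℝ) - lam ≠ 0 := by linarith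
    field_simp
    ring
  rw [hinv]
  linarith [pow_nonneg h0.le n]

lemma G_sub_ge (h0 : 0 < lam) (h1 : lam < 1) {x y : ℝ} (hx : x ∈ Icc (0:ℝ) (1/2))
    (hy : y ∈ Icc (0:ℝ) (1/2)) (hxy : x < y) :
    (y - x) * Real.exp (-((x+y)/(1-(x+y)) * (1-lam)⁻¹)) ≤ G lam y - G lam x := by
  have hs : x + y < 1 := by
    have := hy.2; linarith
  have hr : 0 ≤ (x+y)/(1-(x+y)) := div_nonneg (by linarith [hx.1, hy.1]) (by linarith)
  apply ge_of_tendsto ((Gseq_tendsto h0 h1 hy).sub (Gseq_tendsto h0 h1 hx))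
  filter_upwards with n
  have key := iter_sub_ge h0 h1 hx.1 hxy.le hy.2 hs n
  have hpow : 0 < lam ^ n := pow_pos h0 n
  have hGdiff : Gseq lam n y - Gseq lam n x = ((F lam)^[n] y - (F lam)^[n] x) / lam ^ n := by
    unfold Gseq; ring
  have hexp : Real.exp (-((x+y)/(1-(x+y)) * (1-lam)⁻¹))
      ≤ Real.exp (-((x+y)/(1-(x+y)) * ∑ k ∈ Finset.range n, lam ^ k)) := by
    apply Real.exp_le_exp.2
    have := geom_sum_le_inv h0 h1 n
    nlinarith
  rw [hGdiff, le_div_iff₀ hpow]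
  calc (y - x) * Real.exp (-((x+y)/(1-(x+y)) * (1-lam)⁻¹)) * lam ^ n
      ≤ (y - x) * Real.exp (-((x+y)/(1-(x+y)) * ∑ k ∈ Finset.range n, lam ^ k)) * lam ^ n := by
        have hyx : 0 ≤ y - x := by linarith
        have := mul_le_mul_of_nonneg_left hexp hyx
        nlinarith
    _ = lam ^ n * (y - x) * Real.exp (-((x+y)/(1-(x+y)) * ∑ k ∈ Finset.range n, lam ^ k)) := by
        ring
    _ ≤ (F lam)^[n] y - (F lam)^[n] x := key

lemma G_strictMonoOn (h0 : 0 < lam) (h1 : lam < 1) :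
    StrictMonoOn (G lam) (Icc (0:ℝ) (1/2)) := by
  intro x hx y hy hxy
  have := G_sub_ge h0 h1 hx hy hxy
  have hpos : 0 < (y - x) * Real.exp (-((x+y)/(1-(x+y)) * (1-lam)⁻¹)) := by
    have : 0 < y - x := by linarith
    positivity
  linarith

lemma G_funeq (h0 : 0 < lam) (h1 : lam < 1) {x : ℝ} (hx : x ∈ Icc (0:ℝ) (1/2)) :
    G lam (F lam x) = lam * G lam x := by
  have hFx := F_mem h0 h1 hx
  have t1 : Tendsto (fun n => Gseq lam n (F lam x)) atTop (𝓝 (G lam (F lam x))) :=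
    Gseq_tendsto h0 h1 hFx
  have t2 : Tendsto (fun n => lam * Gseq lam (n+1) x) atTop (𝓝 (lam * G lam x)) := by
    exact ((Gseq_tendsto h0 h1 hx).comp (tendsto_add_atTop_nat 1)).const_mul lam
  have heq : ∀ n, Gseq lam n (F lam x) = lam * Gseq lam (n+1) x := by
    intro n
    unfold Gseq
    rw [← Function.iterate_succ_apply, pow_succ]
    have hpne : lam ^ n ≠ 0 := (pow_pos h0 n).ne'
    field_simp
  exact tendsto_nhds_unique (t1.congr heq) t2



lemma continuousOn_invFunOn {g : ℝ → ℝ} {a b : ℝ} (hab : a ≤ b)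
    (hsm : StrictMonoOn g (Icc a b)) (hsurj : SurjOn g (Icc a b) (Icc (g a) (g b))) :
    ContinuousOn (Function.invFunOn g (Icc a b)) (Icc (g a) (g b)) := by
  set φ := Function.invFunOn g (Icc a b) with hφ
  have hmemab : ∀ y ∈ Icc (g a) (g b), φ y ∈ Icc a b ∧ g (φ y) = y := by
    intro y hy
    obtain ⟨x, hxs, hgx⟩ := hsurj hy
    exact ⟨Function.invFunOn_mem ⟨x, hxs, hgx⟩, Function.invFunOn_eq ⟨x, hxs, hgx⟩⟩
  have hleft : ∀ x ∈ Icc a b, φ (g x) = x := fun x hx => hsm.injOn.leftInvOn_invFunOn hx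
  have hφmono : StrictMonoOn φ (Icc (g a) (g b)) := by
    intro y1 h1 y2 h2 h12
    by_contra hle
    push_neg at hle
    have h3 := hsm.monotoneOn (hmemab _ h2).1 (hmemab _ h1).1 hle
    rw [(hmemab _ h1).2, (hmemab _ h2).2] at h3
    linarith
  intro y hy
  have hamem : a ∈ Icc a b := ⟨le_rfl, hab⟩
  have hbmem : b ∈ Icc a b := ⟨hab, le_rfl⟩
  have hR : ContinuousWithinAt φ (Icc (g a) (g b) ∩ Ici y) y := by
    rcases lt_or_ge y (g b) with hlt | hge
    · have hmem : Icc (g a) (g b) ∈ 𝓝[≥] y :=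
        mem_of_superset (Icc_mem_nhdsGE_of_mem ⟨le_refl y, hlt⟩) (Icc_subset_Icc hy.1 le_rfl)
      have hφyb : φ y < b := by
        rcases lt_or_eq_of_le (hmemab y hy).1.2 with h | h
        · exact h
        · exfalso
          have : g (φ y) = g b := by rw [h]
          rw [(hmemab y hy).2] at this
          linarith
      have key : ContinuousWithinAt φ (Ici y) y := by
        apply hφmono.continuousWithinAt_right_of_exists_between hmem
        intro c hc
        have hac : a ≤ c := le_trans (hmemab y hy).1.1 hc.le
        have hu : min c b ∈ Icc a b := ⟨le_min hac hab, min_le_right _ _⟩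
        refine ⟨g (min c b), ⟨hsm.monotoneOn hamem hu hu.1, hsm.monotoneOn hu hbmem hu.2⟩, ?_⟩
        rw [hleft _ hu]
        exact ⟨lt_min hc hφyb, min_le_left _ _⟩
      exact key.mono inter_subset_right
    · have hsub : Icc (g a) (g b) ∩ Ici y ⊆ {y} := by
        intro z hz
        have : z = y := le_antisymm (hz.1.2.trans hge) hz.2
        simp [this]
      exact (continuousWithinAt_singleton).mono hsub
  have hL : ContinuousWithinAt φ (Icc (g a) (g b) ∩ Iic y) y := by
    rcases lt_or_ge (g a) y with hlt | hge
    · have hmem : Icc (g a) (g b) ∈ 𝓝[≤] y :=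
        mem_of_superset (Icc_mem_nhdsLE_of_mem ⟨hlt, le_refl y⟩) (Icc_subset_Icc le_rfl hy.2)
      have hφya : a < φ y := by
        rcases lt_or_eq_of_le (hmemab y hy).1.1 with h | h
        · exact h
        · exfalso
          have : g (φ y) = g a := by rw [← h]
          rw [(hmemab y hy).2] at this
          linarith
      have key : ContinuousWithinAt φ (Iic y) y := by
        apply hφmono.continuousWithinAt_left_of_exists_between hmem
        intro c hc
        have hcb : c ≤ b := le_trans hc.le (hmemab y hy).1.2
        have hu : max c a ∈ Icc a b := ⟨le_max_right _ _, max_le hcb hab⟩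
        refine ⟨g (max c a), ⟨hsm.monotoneOn hamem hu hu.1, hsm.monotoneOn hu hbmem hu.2⟩, ?_⟩
        rw [hleft _ hu]
        exact ⟨le_max_left _ _, max_lt hc hφya⟩
      exact key.mono inter_subset_right
    · have hsub : Icc (g a) (g b) ∩ Iic y ⊆ {y} := by
        intro z hz
        have : z = y := le_antisymm hz.2 (hge.trans hz.1.1)
        simp [this]
      exact (continuousWithinAt_singleton).mono hsub
  have hunion := hL.union hR
  apply hunion.mono
  intro z hz
  rcases le_total z y with h | h
  · exact Or.inl ⟨hz, h⟩
  · exact Or.inr ⟨hz, h⟩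


end LogisticHalfAux

open LogisticHalfAux in
/-- For `0 < λ < 1` and `f(x) = λ·x·(1−x)`, there is a half-iterate `h` of `f` on `(0, 1/2]`:
continuous and strictly increasing on `(0,1/2]`, mapping `(0,1/2]` into itself, with
`h(h(x)) = f(x)` and `f(x) < h(x) < x` there; in particular `λ/4 < h(1/2) < 1/2`. -/
theorem logistic_half_iterate (lam : ℝ) (h0 : 0 < lam) (h1 : lam < 1) :
    ∃ h : ℝ → ℝ, ContinuousOn h (Set.Ioc 0 (1 / 2)) ∧ StrictMonoOn h (Set.Ioc 0 (1 / 2)) ∧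
      Set.MapsTo h (Set.Ioc 0 (1 / 2)) (Set.Ioc 0 (1 / 2)) ∧
      (∀ x ∈ Set.Ioc (0 : ℝ) (1 / 2),
        h (h x) = lam * x * (1 - x) ∧ lam * x * (1 - x) < h x ∧ h x < x) ∧
      lam / 4 < h (1 / 2) ∧ h (1 / 2) < 1 / 2 := by
  classical
  have hab : (0:ℝ) ≤ 1/2 := by norm_num
  have hGc := G_continuousOn h0 h1
  have hGsm := G_strictMonoOn h0 h1
  have hG0 : G lam 0 = 0 := G_zero lam
  have hMpos : 0 < G lam (1/2) := by
    have := hGsm ⟨le_rfl, hab⟩ ⟨hab, le_rfl⟩ (by norm_num)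
    rwa [hG0] at this
  have hsurj : Set.SurjOn (G lam) (Icc 0 (1/2)) (Icc (G lam 0) (G lam (1/2))) :=
    intermediate_value_Icc hab hGc
  have hsurj' : Set.SurjOn (G lam) (Icc 0 (1/2)) (Icc 0 (G lam (1/2))) := by
    rwa [hG0] at hsurj
  set φ := Function.invFunOn (G lam) (Icc (0:ℝ) (1/2)) with hφdef
  have hinv : ∀ y ∈ Icc (0:ℝ) (G lam (1/2)), φ y ∈ Icc (0:ℝ) (1/2) ∧ G lam (φ y) = y := by
    intro y hy
    obtain ⟨x, hxs, hgx⟩ := hsurj' hy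
    exact ⟨Function.invFunOn_mem ⟨x, hxs, hgx⟩, Function.invFunOn_eq ⟨x, hxs, hgx⟩⟩
  set q := Real.sqrt lam with hqdef
  have hq0 : 0 < q := Real.sqrt_pos.2 h0
  have hqq : q * q = lam := Real.mul_self_sqrt h0.le
  have hq1 : q < 1 := by nlinarith [Real.sqrt_nonneg lam]
  have hlq : lam < q := by nlinarith
  set h : ℝ → ℝ := fun x => φ (q * G lam x) with hhdef
  have hIoc_sub : Set.Ioc (0:ℝ) (1/2) ⊆ Icc 0 (1/2) := Ioc_subset_Icc_self
  have hGpos : ∀ x ∈ Set.Ioc (0:ℝ) (1/2), 0 < G lam x := by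
    intro x hx
    have := hGsm ⟨le_rfl, hab⟩ (hIoc_sub hx) hx.1
    rwa [hG0] at this
  have hGleM : ∀ x ∈ Set.Ioc (0:ℝ) (1/2), G lam x ≤ G lam (1/2) := fun x hx =>
    hGsm.monotoneOn (hIoc_sub hx) ⟨hab, le_rfl⟩ hx.2
  have hymem : ∀ x ∈ Set.Ioc (0:ℝ) (1/2), q * G lam x ∈ Icc (0:ℝ) (G lam (1/2)) := by
    intro x hx
    constructor
    · exact mul_nonneg hq0.le (hGpos x hx).le
    · nlinarith [hGpos x hx, hGleM x hx]
  have hval : ∀ x ∈ Set.Ioc (0:ℝ) (1/2), h x ∈ Icc (0:ℝ) (1/2) ∧ G lam (h x) = q * G lam x :=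
    fun x hx => hinv _ (hymem x hx)
  have hpos : ∀ x ∈ Set.Ioc (0:ℝ) (1/2), 0 < h x := by
    intro x hx
    rcases eq_or_lt_of_le (hval x hx).1.1 with he | hlt
    · exfalso
      have h2 := (hval x hx).2
      rw [← he, hG0] at h2
      nlinarith [hGpos x hx]
    · exact hlt
  have hmapsTo : Set.MapsTo h (Set.Ioc 0 (1/2)) (Set.Ioc 0 (1/2)) :=
    fun x hx => ⟨hpos x hx, (hval x hx).1.2⟩
  have hltx : ∀ x ∈ Set.Ioc (0:ℝ) (1/2), h x < x := by
    intro x hx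
    have h2 : G lam (h x) < G lam x := by
      rw [(hval x hx).2]; nlinarith [hGpos x hx]
    exact ((hGsm.lt_iff_lt (hval x hx).1 (hIoc_sub hx)).1 h2)
  have hFmem' : ∀ x ∈ Set.Ioc (0:ℝ) (1/2), lam * x * (1-x) ∈ Icc (0:ℝ) (1/2) := by
    intro x hx
    exact F_mem h0 h1 (hIoc_sub hx)
  have hfun : ∀ x ∈ Set.Ioc (0:ℝ) (1/2), G lam (lam * x * (1-x)) = lam * G lam x := by
    intro x hx
    exact G_funeq h0 h1 (hIoc_sub hx)
  have hgt : ∀ x ∈ Set.Ioc (0:ℝ) (1/2), lam * x * (1 - x) < h x := by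
    intro x hx
    have h2 : G lam (lam * x * (1-x)) < G lam (h x) := by
      rw [hfun x hx, (hval x hx).2]
      nlinarith [hGpos x hx]
    exact ((hGsm.lt_iff_lt (hFmem' x hx) (hval x hx).1).1 h2)
  have hhh : ∀ x ∈ Set.Ioc (0:ℝ) (1/2), h (h x) = lam * x * (1 - x) := by
    intro x hx
    have hx' := hmapsTo hx
    apply hGsm.injOn (hval _ hx').1 (hFmem' x hx)
    rw [(hval _ hx').2, (hval x hx).2, hfun x hx, ← hqq]
    ring
  have hsmh : StrictMonoOn h (Set.Ioc 0 (1/2)) := by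
    intro x hx y hy hxy
    have h2 : G lam (h x) < G lam (h y) := by
      rw [(hval x hx).2, (hval y hy).2]
      have := hGsm (hIoc_sub hx) (hIoc_sub hy) hxy
      nlinarith
    exact ((hGsm.lt_iff_lt (hval x hx).1 (hval y hy).1).1 h2)
  have hcont : ContinuousOn h (Set.Ioc 0 (1/2)) := by
    have hφc : ContinuousOn φ (Icc (0:ℝ) (G lam (1/2))) := by
      have := continuousOn_invFunOn hab hGsm hsurj
      rwa [hG0] at this
    exact hφc.comp (continuousOn_const.mul (hGc.mono hIoc_sub)) hymem
  have hhalf : (1/2 : ℝ) ∈ Set.Ioc (0:ℝ) (1/2) := ⟨by norm_num, le_rfl⟩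
  refine ⟨h, hcont, hsmh, hmapsTo, fun x hx => ⟨hhh x hx, hgt x hx, hltx x hx⟩, ?_, hltx _ hhalf⟩
  have := hgt _ hhalf
  have heq : lam * (1/2) * (1 - 1/2 : ℝ) = lam/4 := by ring
  linarith
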